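/- Let 𝔥 be a multisegment, Δ = [a,b] admissible to 𝔥, and let Δ₁ be the first segment of the removal sequence for (Δ,𝔥). Set 𝔥* = 𝔥 − Δ₁ + ⁻Δ₁, where ⁻[x,y] = [x+1,y] (dropped if empty). If a < b then ⁻Δ = [a+1,b] is admissible to 𝔥* and 𝔯(Δ, 𝔥) = 𝔯(⁻Δ, 𝔥*). -/
import Mathlib


/-- `s ≺^L t`: compare left endpoints first, then right endpoints. -/
def precL (s t : ℤ × ℤ) : Prop := s.1 < t.1 ∨ (s.1 = t.1 ∧ s.2 < t.2)

/-- The multiset `{[x,y]}` if `x ≤ y`, empty otherwise. -/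
def seg? (x y : ℤ) : Multiset (ℤ × ℤ) := if x ≤ y then {(x, y)} else 0

/-- `Δ = [a,b]` is admissible to the multisegment `h`: `h` contains a segment
`[a,c]` with `c ≥ b`. -/
def Admissible (a b : ℤ) (h : Multiset (ℤ × ℤ)) : Prop := ∃ c : ℤ, (a, c) ∈ h ∧ b ≤ c

/-- `L = [Δ₁, ..., Δ_r]` is the removal sequence for `(Δ, h)`, `Δ = [a,b]`:
`Δ₁` is the shortest segment of `h` with left endpoint `a` and right endpoint `≥ b`;
recursively, `Δ_{i+1}` is the `≺^L`-minimal segment of `h` with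
`a(Δ_i) < a(Δ_{i+1})` and `b ≤ b(Δ_{i+1}) < b(Δ_i)`; the process stops when no
such segment exists. -/
def IsRemovalSeq (a b : ℤ) (h : Multiset (ℤ × ℤ)) (L : List (ℤ × ℤ)) : Prop :=
  L ≠ [] ∧
  ((L[0]!).1 = a ∧ L[0]! ∈ h ∧ b ≤ (L[0]!).2 ∧
    ∀ c : ℤ, (a, c) ∈ h → b ≤ c → (L[0]!).2 ≤ c) ∧
  (∀ i : ℕ, i + 1 < L.length →
    L[i+1]! ∈ h ∧ (L[i]!).1 < (L[i+1]!).1 ∧ b ≤ (L[i+1]!).2 ∧ (L[i+1]!).2 < (L[i]!).2 ∧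
    ∀ s ∈ h, (L[i]!).1 < s.1 → b ≤ s.2 → s.2 < (L[i]!).2 → ¬ precL s (L[i+1]!)) ∧
  (∀ s ∈ h, ¬ ((L[L.length - 1]!).1 < s.1 ∧ b ≤ s.2 ∧ s.2 < (L[L.length - 1]!).2))

/-- `𝔯(Δ, h)` computed from the removal sequence `L = [Δ₁,...,Δ_r]` for
`(Δ, h)`, `Δ = [a,b]`: remove the `Δ_i` from `h` and add the truncated segments
`Δ_i^{tr} = [a(Δ_{i+1}), b(Δ_i)]` for `i < r` and `Δ_r^{tr} = [b(Δ_r)+1, b]`,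
dropping empty segments. -/
def removalResult (b : ℤ) (h : Multiset (ℤ × ℤ)) (L : List (ℤ × ℤ)) : Multiset (ℤ × ℤ) :=
  (h - (L : Multiset (ℤ × ℤ))) +
    (Finset.range (L.length - 1)).sum (fun i => seg? ((L[i+1]!).1) ((L[i]!).2)) +
    seg? ((L[L.length - 1]!).2 + 1) b

lemma getElem!_eq {α : Type*} [Inhabited α] (l : List α) (i : ℕ) (hi : i < l.length) :
    l[i]! = l[i] := List.getElem!_of_getElem? (List.getElem?_eq_getElem hi)

lemma precL_total (s t : ℤ × ℤ) (h1 : ¬ precL s t) (h2 : ¬ precL t s) : s = t := by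
  unfold precL at *
  push_neg at h1 h2
  have e1 : s.1 = t.1 := le_antisymm h2.1 h1.1
  exact Prod.ext e1 (le_antisymm (h2.2 e1.symm) (h1.2 e1))

lemma removalSeq_pointwise (a b : ℤ) (h : Multiset (ℤ × ℤ)) (L1 L2 : List (ℤ × ℤ))
    (h1 : IsRemovalSeq a b h L1) (h2 : IsRemovalSeq a b h L2) :
    ∀ i : ℕ, i < L1.length → i < L2.length → L1[i]! = L2[i]! := by
  obtain ⟨-, ⟨e1a, e1m, e1b, e1min⟩, r1, -⟩ := h1
  obtain ⟨-, ⟨e2a, e2m, e2b, e2min⟩, r2, -⟩ := h2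
  intro i
  induction i with
  | zero =>
    intro _ _
    have m1 : (a, (L1[0]!).2) ∈ h := by
      have : L1[0]! = (a, (L1[0]!).2) := Prod.ext e1a rfl
      rwa [← this]
    have m2 : (a, (L2[0]!).2) ∈ h := by
      have : L2[0]! = (a, (L2[0]!).2) := Prod.ext e2a rfl
      rwa [← this]
    have le1 : (L1[0]!).2 ≤ (L2[0]!).2 := e1min _ m2 e2b
    have le2 : (L2[0]!).2 ≤ (L1[0]!).2 := e2min _ m1 e1b
    exact Prod.ext (e1a.trans e2a.symm) (le_antisymm le1 le2)
  | succ i ih =>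
    intro hi1 hi2
    have eq : L1[i]! = L2[i]! := ih (by omega) (by omega)
    obtain ⟨m1, l1, b1, u1, min1⟩ := r1 i hi1
    obtain ⟨m2, l2, b2, u2, min2⟩ := r2 i hi2
    rw [eq] at l1 u1 min1
    have n1 : ¬ precL (L2[i+1]!) (L1[i+1]!) := min1 _ m2 l2 b2 u2
    have n2 : ¬ precL (L1[i+1]!) (L2[i+1]!) := min2 _ m1 l1 b1 u1
    exact precL_total _ _ n2 n1

lemma removalSeq_unique (a b : ℤ) (h : Multiset (ℤ × ℤ)) (L1 L2 : List (ℤ × ℤ))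
    (h1 : IsRemovalSeq a b h L1) (h2 : IsRemovalSeq a b h L2) : L1 = L2 := by
  have key := removalSeq_pointwise a b h L1 L2 h1 h2
  have hlen : L1.length = L2.length := by
    by_contra hne
    rcases Nat.lt_or_ge L1.length L2.length with hlt | hge
    · obtain ⟨-, -, r2, -⟩ := h2
      obtain ⟨hne1, -, -, t1⟩ := h1
      have hpos : 0 < L1.length := List.length_pos_iff.mpr hne1
      set i := L1.length - 1 with hi
      have hii : i + 1 < L2.length := by omega
      obtain ⟨m2, l2, b2, u2, -⟩ := r2 i hii
      have eq : L1[i]! = L2[i]! := key i (by omega) (by omega)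
      exact t1 _ m2 ⟨by rw [eq]; exact l2, b2, by rw [eq]; exact u2⟩
    · have hlt : L2.length < L1.length := by omega
      obtain ⟨-, -, r1, -⟩ := h1
      obtain ⟨hne2, -, -, t2⟩ := h2
      have hpos : 0 < L2.length := List.length_pos_iff.mpr hne2
      set i := L2.length - 1 with hi
      have hii : i + 1 < L1.length := by omega
      obtain ⟨m1, l1, b1, u1, -⟩ := r1 i hii
      have eq : L2[i]! = L1[i]! := (key i (by omega) (by omega)).symm
      exact t2 _ m1 ⟨by rw [eq]; exact l1, b1, by rw [eq]; exact u1⟩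
  apply List.ext_getElem hlen
  intro i hi1 hi2
  have := key i hi1 hi2
  rwa [getElem!_eq L1 i hi1, getElem!_eq L2 i hi2] at this

lemma sub_add_comm_of_le {α : Type*} [DecidableEq α] (u v T : Multiset α) (hT : T ≤ u) :
    (u + v) - T = (u - T) + v := by
  ext x
  have := Multiset.le_iff_count.mp hT x
  simp only [Multiset.count_sub, Multiset.count_add]
  omega

lemma sub_cons_eq {α : Type*} [DecidableEq α] (h : Multiset α) (x : α) (T : Multiset α) :
    h - (x ::ₘ T) = h.erase x - T := by
  rw [← Multiset.singleton_add, tsub_add_eq_tsub_tsub, Multiset.sub_singleton]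

lemma erase_add_singleton {α : Type*} [DecidableEq α] (u : Multiset α) (x : α) :
    (u + {x}).erase x = u := by
  rw [add_comm, Multiset.singleton_add, Multiset.erase_cons_head]

lemma nodup_coe_le {α : Type*} [DecidableEq α] (l : List α) (u : Multiset α) (hn : l.Nodup)
    (hm : ∀ x ∈ l, x ∈ u) : (l : Multiset α) ≤ u := by
  rw [Multiset.le_iff_count]
  intro x
  by_cases hx : x ∈ l
  · have h1 : Multiset.count x (l : Multiset α) ≤ 1 := by
      rw [Multiset.coe_count]
      exact List.nodup_iff_count_le_one.mp hn x
    have h2 : 1 ≤ u.count x := Multiset.one_le_count_iff_mem.mpr (hm x hx)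
    omega
  · rw [Multiset.coe_count, List.count_eq_zero_of_not_mem hx]
    omega

/-- Let `Δ = [a,b]` be admissible to `𝔥` with removal sequence starting at
`Δ₁ = Υ(Δ,𝔥)`, and let `𝔥* = 𝔥 − Δ₁ + ⁻Δ₁` where `⁻[x,y] = [x+1,y]` (dropped if
empty). If `a < b`, then `⁻Δ = [a+1,b]` is admissible to `𝔥*` and
`𝔯(Δ, 𝔥) = 𝔯(⁻Δ, 𝔥*)`. -/
theorem removal_truncate_first (h : Multiset (ℤ × ℤ)) (a b : ℤ)
    (hab : a < b) (hsegs : ∀ s ∈ h, s.1 ≤ s.2) (hadm : Admissible a b h)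
    (L : List (ℤ × ℤ)) (hL : IsRemovalSeq a b h L) :
    Admissible (a + 1) b (h.erase L[0]! + seg? ((L[0]!).1 + 1) ((L[0]!).2)) ∧
    ∀ L' : List (ℤ × ℤ),
      IsRemovalSeq (a + 1) b (h.erase L[0]! + seg? ((L[0]!).1 + 1) ((L[0]!).2)) L' →
      removalResult b (h.erase L[0]! + seg? ((L[0]!).1 + 1) ((L[0]!).2)) L' =
        removalResult b h L := by
  obtain ⟨hne, hhead, hrec, hterm⟩ := hL
  obtain ⟨Δ₁, T, rfl⟩ := List.exists_cons_of_ne_nil hne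
  obtain ⟨a₀, c₁⟩ := Δ₁
  simp only [List.getElem!_cons_zero] at hhead
  obtain ⟨ha₀, hmem₁, hbc₁, hmin₁⟩ := hhead
  have ha₀' : a = a₀ := ha₀.symm
  subst ha₀'
  have hbc₁ : b ≤ c₁ := hbc₁
  have hmem₁ : ((a, c₁) : ℤ × ℤ) ∈ h := hmem₁
  have hmin₁ : ∀ c : ℤ, (a, c) ∈ h → b ≤ c → c₁ ≤ c := hmin₁
  simp only [List.length_cons, List.getElem!_cons_succ, Nat.add_sub_cancel] at hrec hterm
  set n : ℤ × ℤ := (a + 1, c₁) with hn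
  have hseg : seg? (a + 1) c₁ = ({n} : Multiset (ℤ × ℤ)) := by
    simp only [seg?]
    rw [if_pos (by omega : a + 1 ≤ c₁)]
  simp only [List.getElem!_cons_zero, hseg]
  set hs : Multiset (ℤ × ℤ) := h.erase (a, c₁) + ({n} : Multiset (ℤ × ℤ)) with hhs
  have hsmem : ∀ s : ℤ × ℤ, s ∈ hs ↔ s ∈ h.erase (a, c₁) ∨ s = n := by
    intro s
    rw [hhs, Multiset.mem_add, Multiset.mem_singleton]
  have hnmem : n ∈ hs := (hsmem n).mpr (Or.inr rfl)
  -- basic facts about T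
  have tmem : ∀ i, i < T.length → T[i]! ∈ h := fun i hi => (hrec i (by omega)).1
  have tb : ∀ i, i < T.length → b ≤ (T[i]!).2 := fun i hi => (hrec i (by omega)).2.2.1
  have hrecS : ∀ i, i + 1 < T.length →
      T[i+1]! ∈ h ∧ (T[i]!).1 < (T[i+1]!).1 ∧ b ≤ (T[i+1]!).2 ∧ (T[i+1]!).2 < (T[i]!).2 ∧
      ∀ s ∈ h, (T[i]!).1 < s.1 → b ≤ s.2 → s.2 < (T[i]!).2 → ¬ precL s (T[i+1]!) := by
    intro i hi
    have := hrec (i+1) (by omega)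
    simpa using this
  have hrec0 : ∀ _ : T ≠ [],
      T[0]! ∈ h ∧ a < (T[0]!).1 ∧ b ≤ (T[0]!).2 ∧ (T[0]!).2 < c₁ ∧
      ∀ s ∈ h, a < s.1 → b ≤ s.2 → s.2 < c₁ → ¬ precL s (T[0]!) := by
    intro hT
    have hpos : 0 < T.length := List.length_pos_iff.mpr hT
    have := hrec 0 (by omega)
    simpa using this
  have ta : ∀ i, i < T.length → a < (T[i]!).1 := by
    intro i
    induction i with
    | zero =>
      intro hi
      exact (hrec0 (List.length_pos_iff.mp hi)).2.1
    | succ k ih =>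
      intro hi
      exact (ih (by omega)).trans (hrecS k (by omega)).2.1
  have tc : ∀ i, i < T.length → (T[i]!).2 < c₁ := by
    intro i
    induction i with
    | zero =>
      intro hi
      exact (hrec0 (List.length_pos_iff.mp hi)).2.2.2.1
    | succ k ih =>
      intro hi
      exact lt_trans (hrecS k (by omega)).2.2.2.1 (ih (by omega))
  have tlM : ∀ j, j < T.length → ∀ i, i ≤ j → (T[i]!).1 ≤ (T[j]!).1 := by
    intro j
    induction j with
    | zero =>
      intro _ i hi
      have hi0 : i = 0 := Nat.le_zero.mp hi
      rw [hi0]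
    | succ k ih =>
      intro hk i hi
      rcases Nat.eq_or_lt_of_le hi with h' | h'
      · rw [h']
      · exact (ih (by omega) i (by omega)).trans (le_of_lt (hrecS k hk).2.1)
  have tlS : ∀ i j, i < j → j < T.length → (T[i]!).1 < (T[j]!).1 := by
    intro i j hij hj
    obtain ⟨k, rfl⟩ : ∃ k, j = k + 1 := ⟨j - 1, by omega⟩
    exact lt_of_le_of_lt (tlM k (by omega) i (by omega)) (hrecS k hj).2.1
  have tne : ∀ i, i < T.length → T[i]! ≠ ((a, c₁) : ℤ × ℤ) := by
    intro i hi he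
    have := ta i hi
    rw [he] at this
    exact lt_irrefl a this
  have tmem' : ∀ i, i < T.length → T[i]! ∈ h.erase (a, c₁) := by
    intro i hi
    exact (Multiset.mem_erase_of_ne (tne i hi)).mpr (tmem i hi)
  have tnodup : T.Nodup := by
    rw [List.Nodup]
    rw [List.pairwise_iff_getElem]
    intro i j hi hj hij he
    have := tlS i j hij hj
    rw [getElem!_eq T i hi, getElem!_eq T j hj, he] at this
    exact lt_irrefl _ this
  have tle : (T : Multiset (ℤ × ℤ)) ≤ h.erase (a, c₁) := by
    apply nodup_coe_le _ _ tnodup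
    intro x hx
    obtain ⟨i, hi, rfl⟩ := List.mem_iff_getElem.mp hx
    rw [← getElem!_eq T i hi]
    exact tmem' i hi
  have hsub : h - (((a, c₁) :: T : List (ℤ × ℤ)) : Multiset (ℤ × ℤ)) = h.erase (a, c₁) - T := by
    rw [show (((a, c₁) :: T : List (ℤ × ℤ)) : Multiset (ℤ × ℤ)) = (a, c₁) ::ₘ (T : Multiset (ℤ × ℤ)) by simp]
    exact sub_cons_eq h _ _
  constructor
  · exact ⟨c₁, hnmem, hbc₁⟩
  intro L' hL'
  by_cases hA : ∃ s ∈ h, s.1 = a + 1 ∧ b ≤ s.2 ∧ s.2 < c₁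
  · -- Case A: L' = T
    obtain ⟨w, hw, hw1, hw2, hw3⟩ := hA
    have hTne : T ≠ [] := by
      intro hT
      subst hT
      simp only [List.length_nil, List.getElem!_cons_zero] at hterm
      exact hterm w hw ⟨by omega, hw2, hw3⟩
    have hTpos : 0 < T.length := List.length_pos_iff.mpr hTne
    obtain ⟨k, hk⟩ : ∃ k, T.length = k + 1 := ⟨T.length - 1, by omega⟩
    obtain ⟨h20, h21, h22, h23, h2min⟩ := hrec0 hTne
    have hT01 : (T[0]!).1 = a + 1 := by
      have hp := h2min w hw (by omega) hw2 hw3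
      unfold precL at hp
      push_neg at hp
      omega
    have hseq : IsRemovalSeq (a + 1) b hs T := by
      refine ⟨hTne, ⟨hT01, (hsmem _).mpr (Or.inl (tmem' 0 hTpos)), h22, ?_⟩, ?_, ?_⟩
      · intro c hc hbc
        rcases (hsmem _).mp hc with hc' | hc'
        · have hch : ((a + 1, c) : ℤ × ℤ) ∈ h := Multiset.mem_of_mem_erase hc'
          by_cases hcc : c < c₁
          · have hp := h2min (a + 1, c) hch (by simp) hbc (by simpa)
            unfold precL at hp
            push_neg at hp
            have := hp.2
            simp only [hT01] at this
            simpa using this (by simp)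
          · omega
        · have : c = c₁ := by
            have := congrArg Prod.snd hc'
            simpa using this
          omega
      · intro i hi
        obtain ⟨m, l, bb, u, mn⟩ := hrecS i hi
        refine ⟨(hsmem _).mpr (Or.inl (tmem' (i+1) (by omega))), l, bb, u, ?_⟩
        intro s hsm hl hb hu
        rcases (hsmem _).mp hsm with hs' | hs'
        · exact mn s (Multiset.mem_of_mem_erase hs') hl hb hu
        · exfalso
          have h1 := tlM i (by omega) 0 (by omega)
          have hl2 : (T[i]!).1 < a + 1 := by rw [hs'] at hl; exact hl
          omega
      · intro s hsm
        rcases (hsmem _).mp hsm with hs' | hs'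
        · have := hterm s (Multiset.mem_of_mem_erase hs')
          rw [hk] at this
          simp only [List.getElem!_cons_succ] at this
          rw [hk]
          simpa using this
        · rw [hs', hk]
          simp only [hn, Nat.add_sub_cancel]
          intro ⟨hc1, _, _⟩
          have h1 := tlM k (by omega) 0 (by omega)
          omega
    have hLT : L' = T := removalSeq_unique _ _ _ _ _ hL' hseq
    rw [hLT]
    -- removalResult equality
    unfold removalResult
    simp only [List.length_cons, Nat.add_sub_cancel]
    rw [hk]
    simp only [Nat.add_sub_cancel, List.getElem!_cons_succ]
    rw [Finset.sum_range_succ']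
    simp only [List.getElem!_cons_succ, List.getElem!_cons_zero]
    have hf0 : seg? ((T[0]!).1) c₁ = ({n} : Multiset (ℤ × ℤ)) := by
      rw [hT01]
      simp only [seg?]
      rw [if_pos (by omega : a + 1 ≤ c₁)]
    rw [hf0, hsub]
    rw [hhs, sub_add_comm_of_le _ _ _ tle,
      add_right_comm (h.erase (a, c₁) - (T : Multiset (ℤ × ℤ))) ({n} : Multiset (ℤ × ℤ)),
      add_assoc (h.erase (a, c₁) - (T : Multiset (ℤ × ℤ)))]
  · -- Case B: L' = n :: T
    push_neg at hA
    have ta' : ∀ i, i < T.length → a + 1 < (T[i]!).1 := by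
      intro i hi
      have h1 := ta i hi
      have h2 := tb i hi
      have h3 := tc i hi
      have h4 := tmem i hi
      by_contra hc
      have he : (T[i]!).1 = a + 1 := by omega
      have := hA (T[i]!) h4 he h2
      omega
    have hseq : IsRemovalSeq (a + 1) b hs (n :: T) := by
      refine ⟨List.cons_ne_nil _ _, ⟨by simp [hn], by simpa using hnmem, by simpa [hn] using hbc₁, ?_⟩, ?_, ?_⟩
      · intro c hc hbc
        rcases (hsmem _).mp hc with hc' | hc'
        · have hch : ((a + 1, c) : ℤ × ℤ) ∈ h := Multiset.mem_of_mem_erase hc'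
          have := hA (a + 1, c) hch (by simp) (by simpa)
          simpa [hn] using this
        · have : c = c₁ := by
            have := congrArg Prod.snd hc'
            simpa [hn] using this
          simp [hn, this]
      · intro i hi
        simp only [List.length_cons] at hi
        match i with
        | 0 =>
          have hTne : T ≠ [] := List.length_pos_iff.mp (by omega)
          obtain ⟨h20, h21, h22, h23, h2min⟩ := hrec0 hTne
          simp only [List.getElem!_cons_succ, List.getElem!_cons_zero]
          refine ⟨(hsmem _).mpr (Or.inl (tmem' 0 (by omega))), by simpa [hn] using ta' 0 (by omega), h22, by simpa [hn] using h23, ?_⟩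
          intro s hsm hl hb hu
          have hl' : (a + 1 : ℤ) < s.1 := hl
          have hu' : s.2 < c₁ := hu
          rcases (hsmem _).mp hsm with hs' | hs'
          · exact h2min s (Multiset.mem_of_mem_erase hs') (by omega) hb hu'
          · exfalso
            have hs1 : s.1 = a + 1 := by rw [hs']
            omega
        | j + 1 =>
          obtain ⟨m, l, bb, u, mn⟩ := hrecS j (by omega)
          simp only [List.getElem!_cons_succ]
          refine ⟨(hsmem _).mpr (Or.inl (tmem' (j+1) (by omega))), l, bb, u, ?_⟩
          intro s hsm hl hb hu
          rcases (hsmem _).mp hsm with hs' | hs'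
          · exact mn s (Multiset.mem_of_mem_erase hs') hl hb hu
          · exfalso
            have h1 := ta' j (by omega)
            have hl2 : (T[j]!).1 < a + 1 := by rw [hs'] at hl; exact hl
            omega
      · simp only [List.length_cons, Nat.add_sub_cancel]
        intro s hsm
        rcases (hsmem _).mp hsm with hs' | hs'
        · have hsh := Multiset.mem_of_mem_erase hs'
          have hterm' := hterm s hsh
          rcases eq_or_ne T [] with hT | hT
          · rw [hT] at hterm' ⊢
            simp only [List.length_nil, List.getElem!_cons_zero] at hterm' ⊢
            intro hC
            have hc1 : (a + 1 : ℤ) < s.1 := hC.1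
            have hc3 : s.2 < c₁ := hC.2.2
            exact hterm' ⟨by omega, hC.2.1, hc3⟩
          · obtain ⟨k, hk2⟩ : ∃ k, T.length = k + 1 :=
              ⟨T.length - 1, by have := List.length_pos_iff.mpr hT; omega⟩
            rw [hk2] at hterm' ⊢
            simp only [List.getElem!_cons_succ] at hterm' ⊢
            exact hterm'
        · rcases eq_or_ne T [] with hT | hT
          · rw [hT, hs']
            simp only [List.length_nil, List.getElem!_cons_zero]
            intro hC
            exact lt_irrefl _ hC.1
          · obtain ⟨k, hk2⟩ : ∃ k, T.length = k + 1 :=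
              ⟨T.length - 1, by have := List.length_pos_iff.mpr hT; omega⟩
            rw [hs', hk2]
            simp only [List.getElem!_cons_succ]
            intro hC
            have h1 := ta' k (by omega)
            have h2 : (T[k]!).1 < (a + 1 : ℤ) := hC.1
            omega
    have hLT : L' = n :: T := removalSeq_unique _ _ _ _ _ hL' hseq
    rw [hLT]
    unfold removalResult
    simp only [List.length_cons, Nat.add_sub_cancel]
    have e1 : hs - ((n :: T : List (ℤ × ℤ)) : Multiset (ℤ × ℤ)) =
        h - (((a, c₁) :: T : List (ℤ × ℤ)) : Multiset (ℤ × ℤ)) := by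
      rw [hsub, show ((n :: T : List (ℤ × ℤ)) : Multiset (ℤ × ℤ)) = n ::ₘ (T : Multiset (ℤ × ℤ)) by simp]
      rw [sub_cons_eq, hhs, erase_add_singleton]
    rw [e1]
    congr 1
    · congr 1
      apply Finset.sum_congr rfl
      intro i hi
      match i with
      | 0 => simp [hn]
      | j + 1 => simp
    · match T with
      | [] => simp [hn]
      | t0 :: ts => simp
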